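/- For i = 1,2, let q_i(x,ξ) = (1/2) c_i(x) ξ² + 2 ∫_{(0,∞)} (1 − cos(ξ y)) ν_i(x,dy) be one-dimensional symmetric symbols (so c_i : ℝ → [0,∞) with sup_x c_i(x) < ∞, and ν_i kernels of Borel measures on (0,∞) with sup_x ∫ min{1,y²} ν_i(x,dy) < ∞). Assume there is a kernel ρ of Borel measures on (0,∞) such that ν_1(x,B) ≤ ν_2(x,B) + ρ(x,B) and ν_2(x,B) ≤ ν_1(x,B) + ρ(x,B) for all x ∈ ℝ and Borel B ⊆ (0,∞), and sup_{x∈ℝ} ∫_{(0,∞)} y² ρ(x,dy) < ∞. If ∫_{{|ξ|<r}} dξ / sup_{x∈ℝ} q_1(x,ξ) = ∞ for every r > 0, then ∫_{{|ξ|<r}} dξ / sup_{x∈ℝ} q_2(x,ξ) = ∞ for every r > 0. -/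

import Mathlib

open MeasureTheory Filter Topology
open scoped ENNReal

/-- A one-dimensional symmetric symbol:
`q(x,ξ) = (1/2)c(x)ξ² + 2∫_{(0,∞)} (1 − cos(ξy)) ν(x,dy)`, valued in `[0,∞]`. -/
noncomputable def oneDimSymbol (c : ℝ → ℝ) (ν : ℝ → MeasureTheory.Measure ℝ)
    (x ξ : ℝ) : ℝ≥0∞ :=
  ENNReal.ofReal ((1 / 2) * c x * ξ ^ 2) +
    2 * ∫⁻ y in Set.Ioi (0 : ℝ), ENNReal.ofReal (1 - Real.cos (ξ * y)) ∂(ν x)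

lemma aux_one_sub_cos_le (t : ℝ) : 1 - Real.cos t ≤ t ^ 2 / 2 := by
  have := Real.one_sub_sq_div_two_le_cos (x := t)
  linarith

lemma aux_sq_div_four_le {t : ℝ} (ht : |t| ≤ 1) : t ^ 2 / 4 ≤ 1 - Real.cos t := by
  have h := Real.cos_bound ht
  have h4 : |t| ^ 4 ≤ |t| ^ 2 :=
    pow_le_pow_of_le_one (abs_nonneg t) ht (by norm_num)
  have h2 : |t| ^ 2 = t ^ 2 := sq_abs t
  have h5 := abs_le.1 h
  nlinarith [h5.1, h5.2]

lemma meas_sq : Measurable fun y : ℝ => ENNReal.ofReal (y ^ 2) :=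
  (measurable_id.pow_const 2).ennreal_ofReal

lemma meas_cosfn (ξ : ℝ) :
    Measurable fun y : ℝ => ENNReal.ofReal (1 - Real.cos (ξ * y)) :=
  (measurable_const.sub (Real.measurable_cos.comp (measurable_id.const_mul ξ))).ennreal_ofReal

lemma two_mul_ofReal_half (a : ℝ) :
    (2 : ℝ≥0∞) * ENNReal.ofReal (a / 2) = ENNReal.ofReal a := by
  rw [show (2 : ℝ≥0∞) = ENNReal.ofReal 2 by simp, ← ENNReal.ofReal_mul (by norm_num)]
  congr 1
  ring

lemma jump_le (ξ : ℝ) (μ : MeasureTheory.Measure ℝ) :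
    2 * (∫⁻ y in Set.Ioi (0 : ℝ), ENNReal.ofReal (1 - Real.cos (ξ * y)) ∂μ)
      ≤ ENNReal.ofReal (ξ ^ 2) * ∫⁻ y in Set.Ioi (0 : ℝ), ENNReal.ofReal (y ^ 2) ∂μ := by
  have h1 : (∫⁻ y in Set.Ioi (0 : ℝ), ENNReal.ofReal (1 - Real.cos (ξ * y)) ∂μ)
      ≤ ENNReal.ofReal (ξ ^ 2 / 2) * ∫⁻ y in Set.Ioi (0 : ℝ), ENNReal.ofReal (y ^ 2) ∂μ := by
    rw [← lintegral_const_mul _ meas_sq]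
    refine lintegral_mono fun y => ?_
    rw [← ENNReal.ofReal_mul (by positivity)]
    refine ENNReal.ofReal_le_ofReal ?_
    nlinarith [aux_one_sub_cos_le (ξ * y)]
  calc 2 * (∫⁻ y in Set.Ioi (0 : ℝ), ENNReal.ofReal (1 - Real.cos (ξ * y)) ∂μ)
      ≤ 2 * (ENNReal.ofReal (ξ ^ 2 / 2) * ∫⁻ y in Set.Ioi (0 : ℝ), ENNReal.ofReal (y ^ 2) ∂μ) :=
        mul_le_mul_right h1 2
    _ = ENNReal.ofReal (ξ ^ 2) * ∫⁻ y in Set.Ioi (0 : ℝ), ENNReal.ofReal (y ^ 2) ∂μ := by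
        rw [← mul_assoc, two_mul_ofReal_half]

lemma lint_Ioi_eq_iSup (μ : MeasureTheory.Measure ℝ) {h : ℝ → ℝ≥0∞} (hm : Measurable h) :
    ∫⁻ y in Set.Ioi (0 : ℝ), h y ∂μ = ⨆ n : ℕ, ∫⁻ y in Set.Ioc (0 : ℝ) (n : ℝ), h y ∂μ := by
  have key : (fun y => (Set.Ioi (0 : ℝ)).indicator h y)
      = fun y => ⨆ n : ℕ, (Set.Ioc (0 : ℝ) (n : ℝ)).indicator h y := by
    funext y
    refine le_antisymm ?_
      (iSup_le fun n =>
        Set.indicator_le_indicator_of_subset Set.Ioc_subset_Ioi_self (fun a => zero_le) y)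
    by_cases hy : y ∈ Set.Ioi (0 : ℝ)
    · obtain ⟨n, hn⟩ := exists_nat_ge y
      rw [Set.indicator_of_mem hy]
      exact le_iSup_of_le n
        (le_of_eq (Set.indicator_of_mem (show y ∈ Set.Ioc (0:ℝ) (n:ℝ) from ⟨hy, hn⟩) h).symm)
    · rw [Set.indicator_of_notMem hy]; exact zero_le
  calc ∫⁻ y in Set.Ioi (0 : ℝ), h y ∂μ
      = ∫⁻ y, (Set.Ioi (0 : ℝ)).indicator h y ∂μ := (lintegral_indicator measurableSet_Ioi h).symm
    _ = ∫⁻ y, ⨆ n : ℕ, (Set.Ioc (0 : ℝ) (n : ℝ)).indicator h y ∂μ := by rw [key]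
    _ = ⨆ n : ℕ, ∫⁻ y, (Set.Ioc (0 : ℝ) (n : ℝ)).indicator h y ∂μ := by
        refine lintegral_iSup (fun n => hm.indicator measurableSet_Ioc) ?_
        intro m n hmn y
        exact Set.indicator_le_indicator_of_subset
          (Set.Ioc_subset_Ioc_right (by exact_mod_cast hmn)) (fun a => zero_le) y
    _ = ⨆ n : ℕ, ∫⁻ y in Set.Ioc (0 : ℝ) (n : ℝ), h y ∂μ := by
        simp only [lintegral_indicator measurableSet_Ioc]

lemma lint_inv_sq_ball {r : ℝ} (hr : 0 < r) :
    ∫⁻ ξ in Metric.ball (0 : ℝ) r, (ENNReal.ofReal (ξ ^ 2))⁻¹ = ∞ := by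
  by_contra hfin
  obtain ⟨n, hn⟩ := ENNReal.exists_nat_gt hfin
  set s : ℝ := min r (1 / (n + 1)) with hs
  have hs0 : 0 < s := lt_min hr (by positivity)
  have hsub : Set.Ioo (0 : ℝ) s ⊆ Metric.ball (0 : ℝ) r := by
    intro y hy
    rw [mem_ball_zero_iff, Real.norm_eq_abs, abs_lt]
    constructor
    · linarith [hy.1]
    · exact lt_of_lt_of_le hy.2 (min_le_left _ _)
  have h1 : (ENNReal.ofReal (s ^ 2))⁻¹ * ENNReal.ofReal s
      ≤ ∫⁻ ξ in Set.Ioo (0 : ℝ) s, (ENNReal.ofReal (ξ ^ 2))⁻¹ := by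
    have := setLIntegral_mono (μ := volume) (s := Set.Ioo (0 : ℝ) s)
      (f := fun _ => (ENNReal.ofReal (s ^ 2))⁻¹) meas_sq.inv
      (fun ξ hξ => ENNReal.inv_le_inv' (ENNReal.ofReal_le_ofReal (by nlinarith [hξ.1, hξ.2])))
    rw [setLIntegral_const, Real.volume_Ioo, sub_zero] at this
    exact this
  have hval : (ENNReal.ofReal (s ^ 2))⁻¹ * ENNReal.ofReal s = (ENNReal.ofReal s)⁻¹ := by
    have h0 : ENNReal.ofReal s ≠ 0 := (ENNReal.ofReal_pos.2 hs0).ne'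
    rw [sq, ENNReal.ofReal_mul hs0.le,
      ENNReal.mul_inv (Or.inl h0) (Or.inl ENNReal.ofReal_ne_top), mul_assoc,
      ENNReal.inv_mul_cancel h0 ENNReal.ofReal_ne_top, mul_one]
  have h2 : (n : ℝ≥0∞) ≤ (ENNReal.ofReal s)⁻¹ := by
    have hsle : s ≤ 1 / (n + 1) := min_le_right _ _
    have hmono : (ENNReal.ofReal (1 / (n + 1) : ℝ))⁻¹ ≤ (ENNReal.ofReal s)⁻¹ :=
      ENNReal.inv_le_inv' (ENNReal.ofReal_le_ofReal hsle)
    have heq : (ENNReal.ofReal (1 / (n + 1) : ℝ))⁻¹ = ENNReal.ofReal ((n : ℝ) + 1) := by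
      rw [one_div, ENNReal.ofReal_inv_of_pos (by positivity), inv_inv]
    rw [heq] at hmono
    refine le_trans ?_ hmono
    rw [← ENNReal.ofReal_natCast n]
    exact ENNReal.ofReal_le_ofReal (by linarith)
  have h3 : (n : ℝ≥0∞) ≤ ∫⁻ ξ in Metric.ball (0 : ℝ) r, (ENNReal.ofReal (ξ ^ 2))⁻¹ :=
    le_trans (le_trans h2 (hval ▸ h1)) (lintegral_mono_set hsub)
  exact absurd (lt_of_lt_of_le hn h3) (lt_irrefl _)

lemma caseA {g : ℝ → ℝ≥0∞} {D : ℝ≥0∞} (hD : D ≠ ∞)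
    (hg : ∀ ξ : ℝ, g ξ ≤ ENNReal.ofReal (ξ ^ 2) * D) :
    ∀ r > (0 : ℝ), ∫⁻ ξ in Metric.ball (0 : ℝ) r, (g ξ)⁻¹ = ∞ := by
  intro r hr
  have h1 : ∀ ξ : ℝ, (ENNReal.ofReal (ξ ^ 2))⁻¹ * D⁻¹ ≤ (g ξ)⁻¹ := by
    intro ξ
    rw [← ENNReal.mul_inv (Or.inr hD) (Or.inl ENNReal.ofReal_ne_top)]
    exact ENNReal.inv_le_inv' (hg ξ)
  have h2 : (∫⁻ ξ in Metric.ball (0 : ℝ) r, (ENNReal.ofReal (ξ ^ 2))⁻¹ * D⁻¹)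
      ≤ ∫⁻ ξ in Metric.ball (0 : ℝ) r, (g ξ)⁻¹ := lintegral_mono fun ξ => h1 ξ
  rw [lintegral_mul_const (f := fun y : ℝ => (ENNReal.ofReal (y ^ 2))⁻¹) _ meas_sq.inv, lint_inv_sq_ball hr,
    ENNReal.top_mul (ENNReal.inv_ne_zero.2 hD)] at h2
  exact top_le_iff.1 h2

lemma caseB {f g : ℝ → ℝ≥0∞} (hm₁ : Measurable f) (hm₂ : Measurable g) {s : ℝ} (hs : 0 < s)
    (hCF : ∀ r > (0 : ℝ), ∫⁻ ξ in Metric.ball (0 : ℝ) r, (f ξ)⁻¹ = ∞)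
    (hfg : ∀ ξ : ℝ, |ξ| < s → g ξ ≤ 2 * f ξ) :
    ∀ r > (0 : ℝ), ∫⁻ ξ in Metric.ball (0 : ℝ) r, (g ξ)⁻¹ = ∞ := by
  intro r hr
  set r' : ℝ := min r s with hr'def
  have hr' : 0 < r' := lt_min hr hs
  have hball : ∀ ξ ∈ Metric.ball (0 : ℝ) r', (2 : ℝ≥0∞)⁻¹ * (f ξ)⁻¹ ≤ (g ξ)⁻¹ := by
    intro ξ hξ
    have habs : |ξ| < s := by
      have := mem_ball_zero_iff.1 hξ
      rw [Real.norm_eq_abs] at this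
      exact lt_of_lt_of_le this (min_le_right _ _)
    rw [← ENNReal.mul_inv (Or.inl two_ne_zero) (Or.inl ENNReal.ofNat_ne_top)]
    exact ENNReal.inv_le_inv' (hfg ξ habs)
  have hchain : (⊤ : ℝ≥0∞) ≤ ∫⁻ ξ in Metric.ball (0 : ℝ) r, (g ξ)⁻¹ := by
    calc (⊤ : ℝ≥0∞) = (2 : ℝ≥0∞)⁻¹ * ∫⁻ ξ in Metric.ball (0 : ℝ) r', (f ξ)⁻¹ := by
          rw [hCF r' hr', ENNReal.mul_top (by norm_num)]
      _ = ∫⁻ ξ in Metric.ball (0 : ℝ) r', (2 : ℝ≥0∞)⁻¹ * (f ξ)⁻¹ :=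
          (lintegral_const_mul _ hm₁.inv).symm
      _ ≤ ∫⁻ ξ in Metric.ball (0 : ℝ) r', (g ξ)⁻¹ := setLIntegral_mono hm₂.inv hball
      _ ≤ ∫⁻ ξ in Metric.ball (0 : ℝ) r, (g ξ)⁻¹ :=
          lintegral_mono_set (Metric.ball_subset_ball (min_le_left _ _))
  exact top_le_iff.1 hchain

/-- perturbations of the Lévy kernel with uniformly bounded second moment
do not affect the Chung–Fuchs recurrence condition. -/
theorem stmt10 (c₁ c₂ : ℝ → ℝ) (ν₁ ν₂ ρ : ℝ → MeasureTheory.Measure ℝ)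
    (hc₁ : ∀ x, 0 ≤ c₁ x) (hc₂ : ∀ x, 0 ≤ c₂ x)
    (hc₁b : ∃ K : ℝ, ∀ x, c₁ x ≤ K) (hc₂b : ∃ K : ℝ, ∀ x, c₂ x ≤ K)
    (hν₁ : (⨆ x, ∫⁻ y in Set.Ioi (0 : ℝ), ENNReal.ofReal (min 1 (y ^ 2)) ∂(ν₁ x)) < ∞)
    (hν₂ : (⨆ x, ∫⁻ y in Set.Ioi (0 : ℝ), ENNReal.ofReal (min 1 (y ^ 2)) ∂(ν₂ x)) < ∞)
    (hdom₁ : ∀ x, ∀ B : Set ℝ, MeasurableSet B → B ⊆ Set.Ioi (0 : ℝ) →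
      ν₁ x B ≤ ν₂ x B + ρ x B)
    (hdom₂ : ∀ x, ∀ B : Set ℝ, MeasurableSet B → B ⊆ Set.Ioi (0 : ℝ) →
      ν₂ x B ≤ ν₁ x B + ρ x B)
    (hρ : (⨆ x, ∫⁻ y in Set.Ioi (0 : ℝ), ENNReal.ofReal (y ^ 2) ∂(ρ x)) < ∞)
    (hm₁ : Measurable fun ξ : ℝ => ⨆ x, oneDimSymbol c₁ ν₁ x ξ)
    (hm₂ : Measurable fun ξ : ℝ => ⨆ x, oneDimSymbol c₂ ν₂ x ξ)
    (hCF : ∀ r > (0 : ℝ), ∫⁻ ξ in Metric.ball (0 : ℝ) r,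
      (⨆ x, oneDimSymbol c₁ ν₁ x ξ)⁻¹ = ∞) :
    ∀ r > (0 : ℝ), ∫⁻ ξ in Metric.ball (0 : ℝ) r,
      (⨆ x, oneDimSymbol c₂ ν₂ x ξ)⁻¹ = ∞ := by
  obtain ⟨K, hK⟩ := hc₂b
  set C : ℝ≥0∞ :=
    (⨆ x, ∫⁻ y in Set.Ioi (0 : ℝ), ENNReal.ofReal (y ^ 2) ∂(ρ x)) + ENNReal.ofReal K with hC
  have hCne : C ≠ ∞ := ENNReal.add_ne_top.2 ⟨hρ.ne, ENNReal.ofReal_ne_top⟩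
  -- comparison of the two symbols
  have hcomp : ∀ x ξ : ℝ, oneDimSymbol c₂ ν₂ x ξ
      ≤ (⨆ x', oneDimSymbol c₁ ν₁ x' ξ) + C * ENNReal.ofReal (ξ ^ 2) := by
    intro x ξ
    have hmle : (ν₂ x).restrict (Set.Ioi 0)
        ≤ (ν₁ x).restrict (Set.Ioi 0) + (ρ x).restrict (Set.Ioi 0) := by
      rw [MeasureTheory.Measure.le_iff]
      intro B hB
      rw [MeasureTheory.Measure.add_apply, MeasureTheory.Measure.restrict_apply hB,
        MeasureTheory.Measure.restrict_apply hB, MeasureTheory.Measure.restrict_apply hB]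
      exact hdom₂ x _ (hB.inter measurableSet_Ioi) Set.inter_subset_right
    have hJ : (∫⁻ y in Set.Ioi (0 : ℝ), ENNReal.ofReal (1 - Real.cos (ξ * y)) ∂(ν₂ x))
        ≤ (∫⁻ y in Set.Ioi (0 : ℝ), ENNReal.ofReal (1 - Real.cos (ξ * y)) ∂(ν₁ x))
          + ∫⁻ y in Set.Ioi (0 : ℝ), ENNReal.ofReal (1 - Real.cos (ξ * y)) ∂(ρ x) := by
      refine le_trans (lintegral_mono' hmle le_rfl) (le_of_eq ?_)
      exact lintegral_add_measure _ _ _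
    have hρx : 2 * (∫⁻ y in Set.Ioi (0 : ℝ), ENNReal.ofReal (1 - Real.cos (ξ * y)) ∂(ρ x))
        ≤ ENNReal.ofReal (ξ ^ 2)
            * ⨆ x', ∫⁻ y in Set.Ioi (0 : ℝ), ENNReal.ofReal (y ^ 2) ∂(ρ x') :=
      le_trans (jump_le ξ (ρ x)) (mul_le_mul_right
        (le_iSup (fun x' => ∫⁻ y in Set.Ioi (0 : ℝ), ENNReal.ofReal (y ^ 2) ∂(ρ x')) x) _)
    have hc : ENNReal.ofReal ((1 / 2) * c₂ x * ξ ^ 2)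
        ≤ ENNReal.ofReal (ξ ^ 2) * ENNReal.ofReal K := by
      rw [← ENNReal.ofReal_mul (sq_nonneg ξ)]
      exact ENNReal.ofReal_le_ofReal (by nlinarith [hc₂ x, hK x, sq_nonneg ξ])
    calc oneDimSymbol c₂ ν₂ x ξ
        = ENNReal.ofReal ((1 / 2) * c₂ x * ξ ^ 2)
            + 2 * ∫⁻ y in Set.Ioi (0 : ℝ), ENNReal.ofReal (1 - Real.cos (ξ * y)) ∂(ν₂ x) := rfl
      _ ≤ ENNReal.ofReal (ξ ^ 2) * ENNReal.ofReal K
          + (2 * (∫⁻ y in Set.Ioi (0 : ℝ), ENNReal.ofReal (1 - Real.cos (ξ * y)) ∂(ν₁ x))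
            + 2 * (∫⁻ y in Set.Ioi (0 : ℝ), ENNReal.ofReal (1 - Real.cos (ξ * y)) ∂(ρ x))) := by
          refine add_le_add hc ?_
          refine le_trans (mul_le_mul_right hJ 2) (le_of_eq (mul_add _ _ _))
      _ ≤ ENNReal.ofReal (ξ ^ 2) * ENNReal.ofReal K
          + (oneDimSymbol c₁ ν₁ x ξ
            + ENNReal.ofReal (ξ ^ 2)
              * ⨆ x', ∫⁻ y in Set.Ioi (0 : ℝ), ENNReal.ofReal (y ^ 2) ∂(ρ x')) := by
          refine add_le_add_right (add_le_add (by unfold oneDimSymbol; exact le_add_self) hρx) _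
      _ = oneDimSymbol c₁ ν₁ x ξ + C * ENNReal.ofReal (ξ ^ 2) := by
          rw [hC]; ring
      _ ≤ (⨆ x', oneDimSymbol c₁ ν₁ x' ξ) + C * ENNReal.ofReal (ξ ^ 2) :=
          add_le_add_left (le_iSup (fun x' => oneDimSymbol c₁ ν₁ x' ξ) x) _
  by_cases hcase : ∀ x, ENNReal.ofReal (c₁ x)
      + (∫⁻ y in Set.Ioi (0 : ℝ), ENNReal.ofReal (y ^ 2) ∂(ν₁ x)) ≤ 4 * (C + 1)
  · -- bounded second moments: both symbols dominated by a multiple of ξ², and ∫ dξ/ξ² = ∞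
    have hgb : ∀ ξ : ℝ, (⨆ x, oneDimSymbol c₂ ν₂ x ξ)
        ≤ ENNReal.ofReal (ξ ^ 2) * (5 * (C + 1)) := by
      intro ξ
      have hfb : (⨆ x, oneDimSymbol c₁ ν₁ x ξ) ≤ ENNReal.ofReal (ξ ^ 2) * (4 * (C + 1)) := by
        refine iSup_le fun x => ?_
        have hcc : ENNReal.ofReal ((1 / 2) * c₁ x * ξ ^ 2)
            ≤ ENNReal.ofReal (ξ ^ 2) * ENNReal.ofReal (c₁ x) := by
          rw [← ENNReal.ofReal_mul (sq_nonneg ξ)]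
          exact ENNReal.ofReal_le_ofReal (by nlinarith [hc₁ x, sq_nonneg ξ])
        calc oneDimSymbol c₁ ν₁ x ξ
            ≤ ENNReal.ofReal (ξ ^ 2) * ENNReal.ofReal (c₁ x)
              + ENNReal.ofReal (ξ ^ 2)
                * ∫⁻ y in Set.Ioi (0 : ℝ), ENNReal.ofReal (y ^ 2) ∂(ν₁ x) :=
              add_le_add hcc (jump_le ξ (ν₁ x))
          _ = ENNReal.ofReal (ξ ^ 2) * (ENNReal.ofReal (c₁ x)
              + ∫⁻ y in Set.Ioi (0 : ℝ), ENNReal.ofReal (y ^ 2) ∂(ν₁ x)) := (mul_add _ _ _).symm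
          _ ≤ ENNReal.ofReal (ξ ^ 2) * (4 * (C + 1)) := mul_le_mul_right (hcase x) _
      refine iSup_le fun x => le_trans (hcomp x ξ) ?_
      calc (⨆ x', oneDimSymbol c₁ ν₁ x' ξ) + C * ENNReal.ofReal (ξ ^ 2)
          ≤ ENNReal.ofReal (ξ ^ 2) * (4 * (C + 1)) + (C + 1) * ENNReal.ofReal (ξ ^ 2) :=
            add_le_add hfb (mul_le_mul_left le_self_add _)
        _ = ENNReal.ofReal (ξ ^ 2) * (5 * (C + 1)) := by ring
    exact caseA
      (ENNReal.mul_ne_top (by norm_num) (ENNReal.add_ne_top.2 ⟨hCne, ENNReal.one_ne_top⟩)) hgb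
  · -- some point x₀ has large truncated second moment: quadratic floor near the origin
    push_neg at hcase
    obtain ⟨x₀, hx₀⟩ := hcase
    rw [lint_Ioi_eq_iSup (ν₁ x₀) meas_sq, ENNReal.add_iSup] at hx₀
    obtain ⟨n, hn⟩ := lt_iSup_iff.1 hx₀
    set u : ℝ := max (n : ℝ) 1 with hu
    have hu0 : 0 < u := lt_of_lt_of_le one_pos (le_max_right _ _)
    have hn' : 4 * (C + 1) < ENNReal.ofReal (c₁ x₀)
        + ∫⁻ y in Set.Ioc (0 : ℝ) u, ENNReal.ofReal (y ^ 2) ∂(ν₁ x₀) :=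
      lt_of_lt_of_le hn (add_le_add_right
        (lintegral_mono_set (Set.Ioc_subset_Ioc_right (le_max_left _ _))) _)
    have hfloor : ∀ ξ : ℝ, |ξ| ≤ 1 / u →
        (C + 1) * ENNReal.ofReal (ξ ^ 2) ≤ oneDimSymbol c₁ ν₁ x₀ ξ := by
      intro ξ hξ
      have hkey : ENNReal.ofReal (ξ ^ 2 / 2) * (ENNReal.ofReal (c₁ x₀)
          + ∫⁻ y in Set.Ioc (0 : ℝ) u, ENNReal.ofReal (y ^ 2) ∂(ν₁ x₀))
            ≤ oneDimSymbol c₁ ν₁ x₀ ξ := by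
        unfold oneDimSymbol
        rw [mul_add]
        refine add_le_add ?_ ?_
        · rw [← ENNReal.ofReal_mul (by positivity)]
          exact ENNReal.ofReal_le_ofReal (le_of_eq (by ring))
        · have hpt : ∀ y ∈ Set.Ioc (0 : ℝ) u,
              ENNReal.ofReal (ξ ^ 2 / 4) * ENNReal.ofReal (y ^ 2)
                ≤ ENNReal.ofReal (1 - Real.cos (ξ * y)) := by
            intro y hy
            rw [← ENNReal.ofReal_mul (by positivity)]
            refine ENNReal.ofReal_le_ofReal ?_
            have habs : |ξ * y| ≤ 1 := by
              rw [abs_mul]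
              calc |ξ| * |y| ≤ (1 / u) * u := by
                    refine mul_le_mul hξ ?_ (abs_nonneg y) (by positivity)
                    rw [abs_of_pos hy.1]; exact hy.2
                _ = 1 := by field_simp
            nlinarith [aux_sq_div_four_le habs]
          calc ENNReal.ofReal (ξ ^ 2 / 2)
                * ∫⁻ y in Set.Ioc (0 : ℝ) u, ENNReal.ofReal (y ^ 2) ∂(ν₁ x₀)
              = 2 * (ENNReal.ofReal (ξ ^ 2 / 4)
                  * ∫⁻ y in Set.Ioc (0 : ℝ) u, ENNReal.ofReal (y ^ 2) ∂(ν₁ x₀)) := by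
                rw [← mul_assoc, show (2 : ℝ≥0∞) * ENNReal.ofReal (ξ ^ 2 / 4)
                  = ENNReal.ofReal (ξ ^ 2 / 2) from by
                    rw [show (ξ ^ 2 / 4 : ℝ) = (ξ ^ 2 / 2) / 2 by ring, two_mul_ofReal_half]]
              _ = 2 * ∫⁻ y in Set.Ioc (0 : ℝ) u,
                    ENNReal.ofReal (ξ ^ 2 / 4) * ENNReal.ofReal (y ^ 2) ∂(ν₁ x₀) := by
                rw [lintegral_const_mul _ meas_sq]
              _ ≤ 2 * ∫⁻ y in Set.Ioc (0 : ℝ) u,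
                    ENNReal.ofReal (1 - Real.cos (ξ * y)) ∂(ν₁ x₀) :=
                mul_le_mul_right (setLIntegral_mono (meas_cosfn ξ) hpt) 2
              _ ≤ 2 * ∫⁻ y in Set.Ioi (0 : ℝ),
                    ENNReal.ofReal (1 - Real.cos (ξ * y)) ∂(ν₁ x₀) :=
                mul_le_mul_right (lintegral_mono_set Set.Ioc_subset_Ioi_self) 2
      have e1 : (C + 1) * ENNReal.ofReal (ξ ^ 2)
          = (2 * (C + 1)) * ENNReal.ofReal (ξ ^ 2 / 2) := by
        rw [show ENNReal.ofReal (ξ ^ 2) = 2 * ENNReal.ofReal (ξ ^ 2 / 2)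
          from (two_mul_ofReal_half _).symm]
        ring
      rw [e1]
      refine le_trans (mul_le_mul_left ?_ _) (le_trans (le_of_eq (mul_comm _ _)) hkey)
      calc 2 * (C + 1) ≤ 4 * (C + 1) := mul_le_mul_left (by norm_num) _
        _ ≤ _ := hn'.le
    have h2f : ∀ ξ : ℝ, |ξ| < 1 / u → (⨆ x, oneDimSymbol c₂ ν₂ x ξ)
        ≤ 2 * ⨆ x, oneDimSymbol c₁ ν₁ x ξ := by
      intro ξ hξ
      have hCle : C * ENNReal.ofReal (ξ ^ 2) ≤ ⨆ x, oneDimSymbol c₁ ν₁ x ξ :=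
        le_trans (mul_le_mul_left le_self_add _)
          (le_trans (hfloor ξ hξ.le) (le_iSup (fun x => oneDimSymbol c₁ ν₁ x ξ) x₀))
      refine iSup_le fun x => le_trans (hcomp x ξ) ?_
      calc (⨆ x', oneDimSymbol c₁ ν₁ x' ξ) + C * ENNReal.ofReal (ξ ^ 2)
          ≤ (⨆ x', oneDimSymbol c₁ ν₁ x' ξ) + ⨆ x', oneDimSymbol c₁ ν₁ x' ξ :=
            add_le_add_right hCle _
        _ = 2 * ⨆ x', oneDimSymbol c₁ ν₁ x' ξ := (two_mul _).symm
    exact caseB hm₁ hm₂ (by positivity : (0 : ℝ) < 1 / u) hCF h2f
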